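/- The evaluation map ev is a quasi-isomorphism: for every n ∈ ℤ, the induced ℚ-linear map on cohomology, from ker(d : P^n → P^{n+1})/im(d : P^{n−1} → P^n) to ker(d : C^n → C^{n+1})/im(d : C^{n−1} → C^n), is bijective. -/

import Mathlib

/-!
Setup: `(V, d)` is a cochain complex of `ℚ`-vector spaces indexed by `ℤ`, with
subcomplexes `I, F ⊆ V`.  We model the graded pieces as submodules `V n, I n, F n`
of one ambient `ℚ`-vector space `A`, with one differential `d : A →ₗ[ℚ] A` that maps
`V n` into `V (n+1)` (and similarly for `I`, `F`).

Polynomials `ℚ[x] ⊗ V` with coefficients in `A` are modelled as finitely supported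
functions `ℕ →₀ A`, where `p i` is the coefficient of `xⁱ`.
-/

variable {A : Type*} [AddCommGroup A] [Module ℚ A]

/-- Evaluation at `ε : ℚ` of a polynomial `∑ i, xⁱ ⊗ vᵢ`. -/
noncomputable def evalAt (ε : ℚ) : (ℕ →₀ A) →ₗ[ℚ] A :=
  Finsupp.lsum ℚ fun i : ℕ => ε ^ i • (LinearMap.id : A →ₗ[ℚ] A)

/-- Formal derivative `∂ₓ` in the polynomial variable `x`. -/
noncomputable def polyDeriv : (ℕ →₀ A) →ₗ[ℚ] (ℕ →₀ A) :=
  Finsupp.lsum ℚ fun i : ℕ =>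
    (Finsupp.lsingle (R := ℚ) (i - 1)).comp ((i : ℚ) • (LinearMap.id : A →ₗ[ℚ] A))

/-- Apply a linear map `d` to all coefficients (this is `d_V`). -/
noncomputable def coeffMap (d : A →ₗ[ℚ] A) : (ℕ →₀ A) →ₗ[ℚ] (ℕ →₀ A) :=
  Finsupp.mapRange.linearMap d

/-- `∫₀¹ q := ∑ i, vᵢ / (i+1)`. -/
noncomputable def int01 : (ℕ →₀ A) →ₗ[ℚ] A :=
  Finsupp.lsum ℚ fun i : ℕ => ((i : ℚ) + 1)⁻¹ • (LinearMap.id : A →ₗ[ℚ] A)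

/-- `∫₀ˣ q := ∑ i, x^(i+1)/(i+1) ⊗ vᵢ`. -/
noncomputable def int0x : (ℕ →₀ A) →ₗ[ℚ] (ℕ →₀ A) :=
  Finsupp.lsum ℚ fun i : ℕ =>
    (Finsupp.lsingle (R := ℚ) (i + 1)).comp (((i : ℚ) + 1)⁻¹ • (LinearMap.id : A →ₗ[ℚ] A))

/-- Membership in degree `n` of the Deligne cone complex `Cⁿ = Iⁿ ⊕ Fⁿ ⊕ V^(n-1)`. -/
def MemC (I F V : ℤ → Submodule ℚ A) (n : ℤ) (x : A × A × A) : Prop :=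
  x.1 ∈ I n ∧ x.2.1 ∈ F n ∧ x.2.2 ∈ V (n - 1)

/-- Membership in degree `n` of the Deligne path complex `Pⁿ`: a pair `(p, q)` with
`p ∈ ℚ[x] ⊗ Vⁿ`, `q ∈ ℚ[x] ⊗ V^(n-1)`, `p(0) ∈ Iⁿ` and `p(1) ∈ Fⁿ`. -/
def MemP (I F V : ℤ → Submodule ℚ A) (n : ℤ) (w : (ℕ →₀ A) × (ℕ →₀ A)) : Prop :=
  (∀ i, w.1 i ∈ V n) ∧ (∀ i, w.2 i ∈ V (n - 1)) ∧
    evalAt 0 w.1 ∈ I n ∧ evalAt 1 w.1 ∈ F n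

/-- Differential of the cone complex: `d (a, b, c) = (d a, d b, b - a - d c)`. -/
noncomputable def dCone (d : A →ₗ[ℚ] A) (x : A × A × A) : A × A × A :=
  (d x.1, d x.2.1, x.2.1 - x.1 - d x.2.2)

/-- Differential of the path complex: `d (p, q) = (d_V p, ∂ₓ p - d_V q)`. -/
noncomputable def dPath (d : A →ₗ[ℚ] A) (w : (ℕ →₀ A) × (ℕ →₀ A)) : (ℕ →₀ A) × (ℕ →₀ A) :=
  (coeffMap d w.1, polyDeriv w.1 - coeffMap d w.2)

/-- The evaluation map `ev (p, q) = (p(0), p(1), ∫₀¹ q)`. -/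
noncomputable def evMap : (ℕ →₀ A) × (ℕ →₀ A) → A × A × A :=
  fun w => (evalAt 0 w.1, evalAt 1 w.1, int01 w.2)

/-- The splitting `s (a, b, c) = ((1-x) ⊗ a + x ⊗ b, 1 ⊗ c)`. -/
noncomputable def sMap : A × A × A → (ℕ →₀ A) × (ℕ →₀ A) :=
  fun x => (Finsupp.single 0 x.1 + Finsupp.single 1 (x.2.1 - x.1), Finsupp.single 0 x.2.2)

section Helpers
variable {A : Type*} [AddCommGroup A] [Module ℚ A]

@[simp] lemma evalAt_single (ε : ℚ) (i : ℕ) (v : A) :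
    evalAt ε (Finsupp.single i v) = ε ^ i • v := by
  simp [evalAt]

@[simp] lemma polyDeriv_single (i : ℕ) (v : A) :
    polyDeriv (Finsupp.single i v) = Finsupp.single (i - 1) ((i : ℚ) • v) := by
  simp [polyDeriv]

@[simp] lemma int0x_single (i : ℕ) (v : A) :
    int0x (Finsupp.single i v) = Finsupp.single (i + 1) (((i : ℚ) + 1)⁻¹ • v) := by
  simp [int0x]

@[simp] lemma int01_single (i : ℕ) (v : A) :
    int01 (Finsupp.single i v) = ((i : ℚ) + 1)⁻¹ • v := by
  simp [int01]

@[simp] lemma coeffMap_single (d : A →ₗ[ℚ] A) (i : ℕ) (v : A) :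
    coeffMap d (Finsupp.single i v) = Finsupp.single i (d v) := by
  simp [coeffMap]

end Helpers

section Helpers2
variable {A : Type*} [AddCommGroup A] [Module ℚ A]

lemma evalAt_coeffMap (ε : ℚ) (d : A →ₗ[ℚ] A) (p : ℕ →₀ A) :
    evalAt ε (coeffMap d p) = d (evalAt ε p) := by
  induction p using Finsupp.induction_linear with
  | zero => simp
  | add f g hf hg => simp [map_add, hf, hg]
  | single i v => simp [map_smul]

lemma polyDeriv_int0x (q : ℕ →₀ A) : polyDeriv (int0x q) = q := by
  induction q using Finsupp.induction_linear with
  | zero => simp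
  | add f g hf hg => simp [map_add, hf, hg]
  | single i v =>
      have h : ((i : ℚ) + 1) ≠ 0 := by positivity
      simp [smul_smul, h, mul_inv_cancel₀, push_cast]

lemma int0x_coeffMap (d : A →ₗ[ℚ] A) (q : ℕ →₀ A) :
    int0x (coeffMap d q) = coeffMap d (int0x q) := by
  induction q using Finsupp.induction_linear with
  | zero => simp
  | add f g hf hg => simp [map_add, hf, hg]
  | single i v => simp [map_smul]

lemma evalAt_one_int0x (q : ℕ →₀ A) : evalAt 1 (int0x q) = int01 q := by
  induction q using Finsupp.induction_linear with
  | zero => simp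
  | add f g hf hg => simp [map_add, hf, hg]
  | single i v => simp

lemma evalAt_zero_int0x (q : ℕ →₀ A) : evalAt 0 (int0x q) = 0 := by
  induction q using Finsupp.induction_linear with
  | zero => simp
  | add f g hf hg => simp [map_add, hf, hg]
  | single i v => simp

lemma taylor (p : ℕ →₀ A) :
    Finsupp.single 0 (evalAt 0 p) + int0x (polyDeriv p) = p := by
  induction p using Finsupp.induction_linear with
  | zero => simp
  | add f g hf hg =>
      simp only [map_add, Finsupp.single_add]
      rw [add_add_add_comm, hf, hg]
  | single i v =>
      cases i with
      | zero => simp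
      | succ k =>
          have h : ((k : ℚ) + 1) ≠ 0 := by positivity
          simp [smul_smul]
          rw [inv_mul_cancel₀]; · simp
          · exact h

lemma int0x_apply_zero (q : ℕ →₀ A) : int0x q 0 = 0 := by
  induction q using Finsupp.induction_linear with
  | zero => simp
  | add f g hf hg => simp [map_add, hf, hg]
  | single i v => simp

lemma int0x_apply_succ (q : ℕ →₀ A) (i : ℕ) :
    int0x q (i + 1) = ((i : ℚ) + 1)⁻¹ • q i := by
  induction q using Finsupp.induction_linear with
  | zero => simp
  | add f g hf hg => simp [map_add, hf, hg, smul_add]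
  | single j v =>
      rcases eq_or_ne j i with rfl | hji
      · simp
      · simp [Finsupp.single_apply, hji, Nat.succ_ne_succ.mpr hji]

lemma single_apply_mem (W : Submodule ℚ A) {v : A} (hv : v ∈ W) (j i : ℕ) :
    Finsupp.single j v i ∈ W := by
  rw [Finsupp.single_apply]
  split <;> simp [hv]

lemma int0x_apply_mem (W : Submodule ℚ A) {q : ℕ →₀ A} (hq : ∀ i, q i ∈ W) (i : ℕ) :
    int0x q i ∈ W := by
  cases i with
  | zero => rw [int0x_apply_zero]; exact W.zero_mem
  | succ k => rw [int0x_apply_succ]; exact W.smul_mem _ (hq k)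

end Helpers2

/-- The evaluation map `ev` is a quasi-isomorphism: for every `n : ℤ`
the induced map on `n`-th cohomology, `ker d / im d` of `P` to `ker d / im d` of `C`, is
bijective.  Surjectivity: every cocycle of `Cⁿ` differs from the value of a cocycle of
`Pⁿ` by a coboundary.  Injectivity: a cocycle of `Pⁿ` whose value is a coboundary is
itself a coboundary. -/
theorem ev_is_quasiIso
    (V I F : ℤ → Submodule ℚ A) (d : A →ₗ[ℚ] A)
    (hd2 : ∀ a : A, d (d a) = 0)
    (hIV : ∀ n, I n ≤ V n) (hFV : ∀ n, F n ≤ V n)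
    (hdV : ∀ n, ∀ a ∈ V n, d a ∈ V (n + 1))
    (hdI : ∀ n, ∀ a ∈ I n, d a ∈ I (n + 1))
    (hdF : ∀ n, ∀ a ∈ F n, d a ∈ F (n + 1)) :
    ∀ n : ℤ,
      (∀ y : A × A × A, MemC I F V n y → dCone d y = 0 →
        ∃ x : (ℕ →₀ A) × (ℕ →₀ A), MemP I F V n x ∧ dPath d x = 0 ∧
          ∃ w : A × A × A, MemC I F V (n - 1) w ∧ evMap x - y = dCone d w) ∧
      (∀ x : (ℕ →₀ A) × (ℕ →₀ A), MemP I F V n x → dPath d x = 0 →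
        (∃ w : A × A × A, MemC I F V (n - 1) w ∧ evMap x = dCone d w) →
        ∃ u : (ℕ →₀ A) × (ℕ →₀ A), MemP I F V (n - 1) u ∧ x = dPath d u) := by
  intro n
  constructor
  · -- surjectivity
    rintro ⟨a, b, c⟩ ⟨ha, hb, hc⟩ hdy
    obtain ⟨hda, hdb, hbac⟩ : d a = 0 ∧ d b = 0 ∧ b - a - d c = 0 := by
      simpa [dCone, Prod.ext_iff] using hdy
    refine ⟨sMap (a, b, c), ?_, ?_, 0, ?_, ?_⟩
    · refine ⟨fun i => ?_, fun i => ?_, ?_, ?_⟩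
      · exact (V n).add_mem (single_apply_mem _ (hIV n ha) _ _)
          (single_apply_mem _ ((V n).sub_mem (hFV n hb) (hIV n ha)) _ _)
      · exact single_apply_mem _ hc _ _
      · simpa [sMap] using ha
      · have : evalAt 1 ((sMap ((a : A), b, c)).1) = b := by
          simp [sMap]
        rw [this]; exact hb
    · have h1 : coeffMap d (sMap ((a : A), b, c)).1 = 0 := by
        simp [sMap, map_sub, hda, hdb]
      have h2 : polyDeriv (sMap ((a : A), b, c)).1 - coeffMap d (sMap ((a : A), b, c)).2 = 0 := by
        simp only [sMap, map_add, polyDeriv_single, coeffMap_single, Nat.cast_zero,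
          zero_smul, Finsupp.single_zero, zero_add, Nat.cast_one, one_smul, Nat.sub_self]
        rw [← Finsupp.single_sub]
        simp [hbac]
      simp only [dPath, Prod.ext_iff]
      exact ⟨h1, by simpa using h2⟩
    · exact ⟨(I (n-1)).zero_mem, (F (n-1)).zero_mem, (V (n-1-1)).zero_mem⟩
    · have : evMap (sMap ((a : A), b, c)) = (a, b, c) := by
        simp [evMap, sMap, Prod.ext_iff]
      rw [this]
      simp [dCone]
      exact rfl
  · -- injectivity
    rintro ⟨p, q⟩ ⟨hpV, hqV, hp0, hp1⟩ hdx ⟨⟨α, β, γ⟩, ⟨hα, hβ, hγ⟩, hev⟩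
    obtain ⟨hdp, hq⟩ : coeffMap d p = 0 ∧ polyDeriv p - coeffMap d q = 0 := by
      simpa [dPath, Prod.ext_iff] using hdx
    have hq' : polyDeriv p = coeffMap d q := by
      have := sub_eq_zero.mp hq; exact this
    obtain ⟨h0, h1, hint⟩ : evalAt 0 p = d α ∧ evalAt 1 p = d β ∧ int01 q = β - α - d γ := by
      simpa [evMap, dCone, Prod.ext_iff] using hev
    have hdγV : d γ ∈ V (n - 1) := by
      have := hdV (n - 1 - 1) γ hγ
      rwa [sub_add_cancel] at this
    refine ⟨(Finsupp.single 0 α + int0x q + Finsupp.single 1 (d γ), Finsupp.single 0 γ),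
      ⟨fun i => ?_, fun i => ?_, ?_, ?_⟩, ?_⟩
    · exact (V (n-1)).add_mem ((V (n-1)).add_mem (single_apply_mem _ (hIV _ hα) _ _)
        (int0x_apply_mem _ hqV _)) (single_apply_mem _ hdγV _ _)
    · exact single_apply_mem _ hγ _ _
    · have : evalAt 0 (Finsupp.single 0 α + int0x q + Finsupp.single 1 (d γ)) = α := by
        rw [map_add, map_add, evalAt_zero_int0x]
        simp
      rw [this]; exact hα
    · have : evalAt 1 (Finsupp.single 0 α + int0x q + Finsupp.single 1 (d γ)) = β := by
        rw [map_add, map_add, evalAt_one_int0x, hint]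
        simp
        abel
      rw [this]; exact hβ
    · have e1 : coeffMap d (Finsupp.single 0 α + int0x q + Finsupp.single 1 (d γ)) = p := by
        rw [map_add, map_add, coeffMap_single, coeffMap_single, hd2,
          Finsupp.single_zero, add_zero, ← int0x_coeffMap, ← hq', ← h0]
        exact taylor p
      have e2 : polyDeriv (Finsupp.single 0 α + int0x q + Finsupp.single 1 (d γ))
          - coeffMap d (Finsupp.single 0 γ) = q := by
        rw [map_add, map_add, polyDeriv_int0x, polyDeriv_single, polyDeriv_single,
          coeffMap_single]
        simp
      simp only [dPath, Prod.ext_iff]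
      exact ⟨e1.symm, e2.symm⟩
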